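/- Let d : ℕ with d ≥ 1 and let p : Fin d → ℝ satisfy p i > 0 for all i and Σ_i p i = 1. Let ψ(x) := deriv (fun y => Real.log (Real.Gamma y)) x denote the digamma function. Then the function α ↦ (Σ_i p i · (ψ(α·p i + 1) − ψ(α + 1) − log (p i))) − (d − 1)/(2α) is O(α⁻²) as α → ∞ (Filter.IsBigO along Filter.atTop with respect to α ↦ α⁻²). In particular, the expected Kullback–Leibler divergence of a Dirichlet(α·p) draw from p equals (d−1)/(2α) + O(α⁻²), independently of the baseline p. -/

import Mathlib

open Filter Real Asymptotics

/-- The digamma function `ψ(x) = (log ∘ Γ)'(x)`. -/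
noncomputable def digamma (x : ℝ) : ℝ := deriv (fun y => Real.log (Real.Gamma y)) x

lemma hasDerivAt_logGamma {x : ℝ} (hx : 0 < x) :
    HasDerivAt (fun y => Real.log (Real.Gamma y)) (digamma x) x := by
  have h1 : DifferentiableAt ℝ Real.Gamma x := by
    apply Real.differentiableAt_Gamma
    intro m
    have : (0:ℝ) ≤ m := Nat.cast_nonneg m
    intro h; rw [h] at hx; linarith
  have h2 : Real.Gamma x ≠ 0 := (Real.Gamma_pos_of_pos hx).ne'
  exact (h1.log h2).hasDerivAt

lemma digamma_add_one {x : ℝ} (hx : 0 < x) :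
    digamma (x + 1) = digamma x + x⁻¹ := by
  have hL : HasDerivAt (fun y => Real.log (Real.Gamma (y + 1))) (digamma (x + 1)) x :=
    (hasDerivAt_logGamma (by linarith)).comp_add_const x 1
  have hR : HasDerivAt (fun y => Real.log (Real.Gamma y) + Real.log y)
      (digamma x + x⁻¹) x :=
    (hasDerivAt_logGamma hx).add (Real.hasDerivAt_log hx.ne')
  have heq : (fun y => Real.log (Real.Gamma (y + 1)))
      =ᶠ[nhds x] (fun y => Real.log (Real.Gamma y) + Real.log y) := by
    filter_upwards [eventually_gt_nhds hx] with y hy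
    rw [Real.Gamma_add_one hy.ne', Real.log_mul hy.ne' (Real.Gamma_pos_of_pos hy).ne',
      add_comm]
  exact ((hR.congr_of_eventuallyEq heq).unique hL).symm

lemma logGamma_slope {x : ℝ} (hx : 0 < x) :
    slope (Real.log ∘ Real.Gamma) x (x + 1) = Real.log x := by
  rw [slope_def_field]
  simp only [Function.comp_apply]
  rw [Real.Gamma_add_one hx.ne', Real.log_mul hx.ne' (Real.Gamma_pos_of_pos hx).ne']
  field_simp
  ring

lemma log_le_digamma_succ {x : ℝ} (hx : 0 < x) : Real.log x ≤ digamma (x + 1) := by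
  have h := Real.convexOn_log_Gamma.slope_le_of_hasDerivAt (x := x) (y := x + 1)
    (Set.mem_Ioi.mpr hx) (Set.mem_Ioi.mpr (by linarith)) (lt_add_one x)
    (hasDerivAt_logGamma (by linarith))
  rwa [logGamma_slope hx] at h

lemma digamma_succ_le_log {x : ℝ} (hx : 0 < x) : digamma (x + 1) ≤ Real.log (x + 1) := by
  have h := Real.convexOn_log_Gamma.le_slope_of_hasDerivAt (x := x + 1) (y := x + 2)
    (Set.mem_Ioi.mpr (by linarith)) (Set.mem_Ioi.mpr (by linarith)) (by linarith)
    (hasDerivAt_logGamma (by linarith))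
  have h2 : slope (Real.log ∘ Real.Gamma) (x + 1) (x + 1 + 1) = Real.log (x + 1) :=
    logGamma_slope (by linarith)
  rw [show x + (2:ℝ) = x + 1 + 1 by ring] at h
  rwa [h2] at h

noncomputable def Ufun (t : ℝ) : ℝ := t / 2 + t / (2 * (1 + t)) - Real.log (1 + t)

lemma hasDerivAt_Ufun {t : ℝ} (ht : 0 < 1 + t) :
    HasDerivAt Ufun (t ^ 2 / (2 * (1 + t) ^ 2)) t := by
  have h2 : HasDerivAt (fun s : ℝ => s / (2 * (1 + s))) (1 / (2 * (1 + t) ^ 2)) t := by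
    have hden : HasDerivAt (fun s : ℝ => 2 * (1 + s)) 2 t := by
      simpa using ((hasDerivAt_const t (1:ℝ)).add (hasDerivAt_id t)).const_mul (2:ℝ)
    have := (hasDerivAt_id t).div hden (by positivity)
    refine this.congr_deriv ?_
    field_simp [ht.ne']
    simp only [id_eq]
    ring
  have h1 : HasDerivAt (fun s : ℝ => s / 2) (1 / 2) t := by
    simpa using (hasDerivAt_id t).div_const 2
  have h3 : HasDerivAt (fun s : ℝ => Real.log (1 + s)) (1 / (1 + t)) t := by
    have := (Real.hasDerivAt_log ht.ne').comp t
      (((hasDerivAt_const t (1:ℝ)).add (hasDerivAt_id t)))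
    simpa [one_div, Function.comp_def] using this
  have := (h1.add h2).sub h3
  refine this.congr_deriv ?_
  field_simp [ht.ne']
  ring

lemma Ufun_nonneg {t : ℝ} (ht : 0 ≤ t) : 0 ≤ Ufun t := by
  have h0 : Ufun 0 = 0 := by simp [Ufun]
  have hmono : MonotoneOn Ufun (Set.Ici (0:ℝ)) := by
    apply monotoneOn_of_deriv_nonneg (convex_Ici 0)
    · intro s hs
      exact (hasDerivAt_Ufun (by simp at hs; linarith)).differentiableAt.continuousAt.continuousWithinAt
    · intro s hs
      rw [interior_Ici] at hs
      exact (hasDerivAt_Ufun (by simp at hs; linarith)).differentiableAt.differentiableWithinAt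
    · intro s hs
      rw [interior_Ici] at hs
      rw [(hasDerivAt_Ufun (by simp at hs; linarith)).deriv]
      positivity
  calc (0:ℝ) = Ufun 0 := h0.symm
  _ ≤ Ufun t := hmono (Set.self_mem_Ici) (Set.mem_Ici.mpr ht) ht

lemma Ufun_le {t : ℝ} (ht : 0 ≤ t) : Ufun t ≤ t ^ 3 / 6 := by
  set V : ℝ → ℝ := fun t => t ^ 3 / 6 - Ufun t with hV
  have hVd : ∀ {s : ℝ}, 0 < 1 + s → HasDerivAt V (s ^ 2 / 2 - s ^ 2 / (2 * (1 + s) ^ 2)) s := by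
    intro s hs
    have h1 : HasDerivAt (fun u : ℝ => u ^ 3 / 6) (s ^ 2 / 2) s := by
      have := (hasDerivAt_pow 3 s).div_const 6
      refine this.congr_deriv ?_; norm_num; ring
    exact h1.sub (hasDerivAt_Ufun hs)
  have h0 : V 0 = 0 := by simp [hV, Ufun]
  have hmono : MonotoneOn V (Set.Ici (0:ℝ)) := by
    apply monotoneOn_of_deriv_nonneg (convex_Ici 0)
    · intro s hs
      exact (hVd (by simp at hs; linarith)).differentiableAt.continuousAt.continuousWithinAt
    · intro s hs
      rw [interior_Ici] at hs
      exact (hVd (by simp at hs; linarith)).differentiableAt.differentiableWithinAt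
    · intro s hs
      rw [interior_Ici] at hs
      rw [(hVd (by simp at hs; linarith)).deriv]
      have h1 : (1:ℝ) ≤ (1 + s) ^ 2 := by nlinarith [hs.out]
      have h2 : s ^ 2 / (2 * (1 + s) ^ 2) ≤ s ^ 2 / 2 := by
        apply div_le_div_of_nonneg_left (by positivity) (by norm_num) (by nlinarith)
      linarith
  have := hmono (Set.self_mem_Ici) (Set.mem_Ici.mpr ht) ht
  rw [h0] at this
  simpa [hV] using this

noncomputable def Fdg (x : ℝ) : ℝ := digamma (x + 1) - Real.log x
noncomputable def gg (x : ℝ) : ℝ := Real.log (x + 1) - Real.log x - 1 / (x + 1)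
noncomputable def hh (x : ℝ) : ℝ := 1 / (2 * x) - 1 / (2 * (x + 1))

lemma Fdg_nonneg {x : ℝ} (hx : 0 < x) : 0 ≤ Fdg x :=
  sub_nonneg.mpr (log_le_digamma_succ hx)

lemma Fdg_le {x : ℝ} (hx : 0 < x) : Fdg x ≤ 1 / x := by
  have h1 : Fdg x ≤ Real.log (x + 1) - Real.log x :=
    sub_le_sub_right (digamma_succ_le_log hx) _
  have h2 : Real.log (x + 1) - Real.log x ≤ 1 / x := by
    rw [← Real.log_div (by linarith) hx.ne']
    have := Real.log_le_sub_one_of_pos (x := (x + 1) / x) (by positivity)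
    have hx' : (x + 1) / x - 1 = 1 / x := by field_simp; ring
    linarith [hx' ▸ this]
  linarith

lemma Fdg_succ {x : ℝ} (hx : 0 < x) : Fdg (x + 1) = Fdg x - gg x := by
  unfold Fdg gg
  rw [show x + 1 + 1 = (x + 1) + 1 by ring, digamma_add_one (by linarith)]
  field_simp
  ring

lemma Fdg_eq_add_sum {x : ℝ} (hx : 0 < x) (n : ℕ) :
    Fdg x = Fdg (x + n) + ∑ m ∈ Finset.range n, gg (x + m) := by
  induction n with
  | zero => simp
  | succ n ih =>
    rw [Finset.sum_range_succ, ih]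
    have hxn : (0:ℝ) < x + n := by positivity
    have := Fdg_succ hxn
    rw [show x + (n:ℝ) + 1 = x + (n + 1 : ℕ) by push_cast; ring] at this
    rw [this]
    ring

lemma hh_sum {x : ℝ} (hx : 0 < x) (n : ℕ) :
    ∑ m ∈ Finset.range n, hh (x + m) = 1 / (2 * x) - 1 / (2 * (x + n)) := by
  induction n with
  | zero => simp
  | succ n ih =>
    rw [Finset.sum_range_succ, ih]
    unfold hh
    push_cast
    ring

lemma gg_le_hh {y : ℝ} (hy : 0 < y) :
    0 ≤ hh y - gg y ∧ hh y - gg y ≤ 1 / (6 * y ^ 3) := by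
  have hkey : hh y - gg y = Ufun (1 / y) := by
    unfold hh gg Ufun
    rw [show Real.log (1 + 1 / y) = Real.log (y + 1) - Real.log y by
      rw [← Real.log_div (by positivity) hy.ne']; congr 1; field_simp]
    field_simp
    ring
  have ht : (0:ℝ) ≤ 1 / y := by positivity
  constructor
  · rw [hkey]; exact Ufun_nonneg ht
  · rw [hkey]
    have := Ufun_le ht
    have h2 : (1 / y) ^ 3 / 6 = 1 / (6 * y ^ 3) := by field_simp
    linarith [h2 ▸ this]

lemma cube_sum_aux (n : ℕ) : ∀ x : ℝ, 0 < x →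
    ∑ m ∈ Finset.range n, 1 / (x + 1 + m) ^ 3 ≤ 1 / (2 * x ^ 2) - 1 / (2 * (x + n) ^ 2) := by
  induction n with
  | zero => intro x hx; simp
  | succ n ih =>
    intro x hx
    rw [Finset.sum_range_succ']
    have h1 : ∑ m ∈ Finset.range n, 1 / (x + 1 + (m + 1 : ℕ)) ^ 3
        ≤ 1 / (2 * (x + 1) ^ 2) - 1 / (2 * (x + 1 + n) ^ 2) := by
      have := ih (x + 1) (by linarith)
      calc ∑ m ∈ Finset.range n, 1 / (x + 1 + (m + 1 : ℕ)) ^ 3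
          = ∑ m ∈ Finset.range n, 1 / (x + 1 + 1 + m) ^ 3 := by
            apply Finset.sum_congr rfl; intro m _; push_cast; ring_nf
        _ ≤ 1 / (2 * (x + 1) ^ 2) - 1 / (2 * (x + 1 + n) ^ 2) := this
    have h2 : 1 / (x + 1 + (0:ℕ)) ^ 3 + 1 / (2 * (x + 1) ^ 2) ≤ 1 / (2 * x ^ 2) := by
      push_cast
      rw [add_zero]
      have hx1 : (0:ℝ) < x + 1 := by linarith
      rw [div_add_div _ _ (by positivity) (by positivity), div_le_div_iff₀ (by positivity) (by positivity)]
      nlinarith [pow_pos hx1 3, pow_pos hx 2, sq_nonneg x, sq_nonneg (x+1)]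
    have h3 : (x + 1 + (n:ℝ)) = x + (n + 1 : ℕ) := by push_cast; ring
    rw [h3] at h1
    linarith

lemma cube_sum {x : ℝ} (hx : 0 < x) (n : ℕ) :
    ∑ m ∈ Finset.range n, 1 / (x + m) ^ 3 ≤ 1 / x ^ 3 + 1 / (2 * x ^ 2) := by
  cases n with
  | zero => simp; positivity
  | succ n =>
    rw [Finset.sum_range_succ']
    have h1 : ∑ m ∈ Finset.range n, 1 / (x + (m + 1 : ℕ)) ^ 3
        ≤ 1 / (2 * x ^ 2) - 1 / (2 * (x + n) ^ 2) := by
      have := cube_sum_aux n x hx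
      calc ∑ m ∈ Finset.range n, 1 / (x + (m + 1 : ℕ)) ^ 3
          = ∑ m ∈ Finset.range n, 1 / (x + 1 + m) ^ 3 := by
            apply Finset.sum_congr rfl; intro m _; push_cast; ring_nf
        _ ≤ _ := this
    have h2 : (0:ℝ) < (x + n) ^ 2 := by positivity
    have h3 : 0 < 1 / (2 * (x + n) ^ 2) := by positivity
    push_cast at h1 ⊢
    rw [add_zero]
    linarith

lemma E_bound {x : ℝ} (hx : 1 ≤ x) : |Fdg x - 1 / (2 * x)| ≤ 1 / x ^ 2 := by
  have hx0 : (0:ℝ) < x := by linarith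
  have key : ∀ n : ℕ, Fdg x - 1 / (2 * x) =
      Fdg (x + n) - (∑ m ∈ Finset.range n, (hh (x + m) - gg (x + m))) - 1 / (2 * (x + n)) := by
    intro n
    have h1 := Fdg_eq_add_sum hx0 n
    have h2 := hh_sum hx0 n
    rw [Finset.sum_sub_distrib, h2]
    linarith
  have htend : Tendsto (fun n : ℕ => x + (n:ℝ)) atTop atTop :=
    tendsto_atTop_add_const_left _ x tendsto_natCast_atTop_atTop
  have hub : Fdg x - 1 / (2 * x) ≤ 0 := by
    have hle : ∀ n : ℕ, Fdg x - 1 / (2 * x) ≤ 1 / (x + n) := by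
      intro n
      have hxn : (0:ℝ) < x + n := by positivity
      have hs : 0 ≤ ∑ m ∈ Finset.range n, (hh (x + m) - gg (x + m)) :=
        Finset.sum_nonneg fun m _ => (gg_le_hh (by positivity)).1
      have := key n
      have h3 : (0:ℝ) < 1 / (2 * (x + n)) := by positivity
      have h4 := Fdg_le hxn
      linarith
    have h0 : Tendsto (fun n : ℕ => 1 / (x + (n:ℝ))) atTop (nhds 0) := by
      simpa [one_div, Pi.inv_def] using htend.inv_tendsto_atTop
    exact ge_of_tendsto' h0 hle
  have hlb : -(1 / 6 * (1 / x ^ 3 + 1 / (2 * x ^ 2))) ≤ Fdg x - 1 / (2 * x) := by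
    have hle : ∀ n : ℕ, -(1 / 6 * (1 / x ^ 3 + 1 / (2 * x ^ 2))) - 1 / (2 * (x + n))
        ≤ Fdg x - 1 / (2 * x) := by
      intro n
      have hxn : (0:ℝ) < x + n := by positivity
      have hF := Fdg_nonneg hxn
      have hs : ∑ m ∈ Finset.range n, (hh (x + m) - gg (x + m))
          ≤ 1 / 6 * (1 / x ^ 3 + 1 / (2 * x ^ 2)) := by
        calc ∑ m ∈ Finset.range n, (hh (x + m) - gg (x + m))
            ≤ ∑ m ∈ Finset.range n, 1 / (6 * (x + m) ^ 3) := by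
              apply Finset.sum_le_sum
              intro m _
              exact (gg_le_hh (by positivity)).2
          _ = 1 / 6 * ∑ m ∈ Finset.range n, 1 / (x + m) ^ 3 := by
              rw [Finset.mul_sum]
              apply Finset.sum_congr rfl
              simp [one_div, mul_inv, mul_comm]
          _ ≤ 1 / 6 * (1 / x ^ 3 + 1 / (2 * x ^ 2)) := by
              have := cube_sum hx0 n
              linarith
      have := key n
      linarith
    have h0 : Tendsto (fun n : ℕ => -(1 / 6 * (1 / x ^ 3 + 1 / (2 * x ^ 2))) - 1 / (2 * (x + (n:ℝ))))
        atTop (nhds (-(1 / 6 * (1 / x ^ 3 + 1 / (2 * x ^ 2))) - 0)) := by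
      apply Tendsto.sub tendsto_const_nhds
      have : Tendsto (fun n : ℕ => 2 * (x + (n:ℝ))) atTop atTop :=
        (tendsto_atTop_add_const_left _ x tendsto_natCast_atTop_atTop).const_mul_atTop (by norm_num)
      have h5 : Tendsto (fun n : ℕ => 1 / (2 * (x + (n:ℝ)))) atTop (nhds 0) := by
        simp only [one_div]
        exact this.inv_tendsto_atTop
      exact h5
    rw [sub_zero] at h0
    exact le_of_tendsto' h0 (fun n => hle n)
  rw [abs_le]
  constructor
  · have hcube : 1 / x ^ 3 ≤ 1 / x ^ 2 := by
      apply div_le_div_of_nonneg_left (by norm_num) (by positivity)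
      nlinarith
    have : 1 / 6 * (1 / x ^ 3 + 1 / (2 * x ^ 2)) ≤ 1 / x ^ 2 := by
      have h2 : 1 / (2 * x ^ 2) ≤ 1 / x ^ 2 := by
        apply div_le_div_of_nonneg_left (by norm_num) (by positivity)
        nlinarith
      linarith
    linarith
  · have : (0:ℝ) < 1 / x ^ 2 := by positivity
    linarith

/-- Large-`α` asymptotics of the expected KL divergence of a `Dirichlet(α p)` draw from `p`:
`Σ_i p_i (ψ(α p_i + 1) − ψ(α + 1) − log p_i) = (d−1)/(2α) + O(α⁻²)` as `α → ∞`. -/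
theorem dirichlet_expected_kl_asymptotics (d : ℕ) (hd : 1 ≤ d) (p : Fin d → ℝ)
    (hp : ∀ i, 0 < p i) (hsum : ∑ i, p i = 1) :
    (fun α : ℝ =>
        (∑ i, p i * (digamma (α * p i + 1) - digamma (α + 1) - Real.log (p i))) -
          ((d : ℝ) - 1) / (2 * α))
      =O[atTop] (fun α : ℝ => (α ^ 2)⁻¹) := by
  apply IsBigO.of_bound ((∑ i, (p i)⁻¹) + 1)
  have hev2 : ∀ᶠ α : ℝ in atTop, ∀ i, 1 ≤ α * p i := by
    rw [eventually_all]
    intro i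
    filter_upwards [eventually_ge_atTop (1 / p i)] with α hα
    rw [div_le_iff₀ (hp i)] at hα
    linarith
  filter_upwards [eventually_ge_atTop (1:ℝ), hev2] with α hα1 hα2
  have hα0 : (0:ℝ) < α := lt_of_lt_of_le one_pos hα1
  have hterm : ∀ i, p i * (digamma (α * p i + 1) - digamma (α + 1) - Real.log (p i)) =
      p i * ((Fdg (α * p i) - 1 / (2 * (α * p i))) - (Fdg α - 1 / (2 * α))) +
        (1 / (2 * α) - p i * (1 / (2 * α))) := by
    intro i
    have hpi := hp i
    unfold Fdg
    rw [Real.log_mul hα0.ne' hpi.ne']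
    field_simp
    ring
  have hsum_eq : (∑ i, p i * (digamma (α * p i + 1) - digamma (α + 1) - Real.log (p i))) -
      ((d : ℝ) - 1) / (2 * α) =
      ∑ i, p i * ((Fdg (α * p i) - 1 / (2 * (α * p i))) - (Fdg α - 1 / (2 * α))) := by
    rw [Finset.sum_congr rfl fun i _ => hterm i, Finset.sum_add_distrib,
      Finset.sum_sub_distrib, ← Finset.sum_mul, hsum, Finset.sum_const, Finset.card_univ,
      Fintype.card_fin]
    have : ((d : ℝ) - 1) / (2 * α) = (d : ℝ) • (1 / (2 * α)) - 1 * (1 / (2 * α)) := by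
      rw [smul_eq_mul]
      field_simp
    rw [nsmul_eq_mul] at *
    rw [this, smul_eq_mul]
    ring
  rw [hsum_eq]
  have hnormα : ‖(α ^ 2)⁻¹‖ = (α ^ 2)⁻¹ := by
    rw [Real.norm_eq_abs, abs_of_pos (by positivity)]
  rw [hnormα, Real.norm_eq_abs]
  calc |∑ i, p i * ((Fdg (α * p i) - 1 / (2 * (α * p i))) - (Fdg α - 1 / (2 * α)))|
      ≤ ∑ i, |p i * ((Fdg (α * p i) - 1 / (2 * (α * p i))) - (Fdg α - 1 / (2 * α)))| :=
        Finset.abs_sum_le_sum_abs _ _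
    _ ≤ ∑ i, ((p i)⁻¹ + p i) * (α ^ 2)⁻¹ := by
        apply Finset.sum_le_sum
        intro i _
        have hpi := hp i
        have h1 := E_bound (hα2 i)
        have h2 := E_bound hα1
        rw [abs_mul, abs_of_pos hpi]
        have h3 : |Fdg (α * p i) - 1 / (2 * (α * p i)) - (Fdg α - 1 / (2 * α))| ≤
            1 / (α * p i) ^ 2 + 1 / α ^ 2 := by
          calc _ ≤ |Fdg (α * p i) - 1 / (2 * (α * p i))| + |Fdg α - 1 / (2 * α)| :=
                abs_sub _ _
            _ ≤ _ := add_le_add h1 h2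
        have h4 : p i * (1 / (α * p i) ^ 2 + 1 / α ^ 2) = ((p i)⁻¹ + p i) * (α ^ 2)⁻¹ := by
          field_simp
        calc p i * |Fdg (α * p i) - 1 / (2 * (α * p i)) - (Fdg α - 1 / (2 * α))|
            ≤ p i * (1 / (α * p i) ^ 2 + 1 / α ^ 2) := by
              apply mul_le_mul_of_nonneg_left h3 hpi.le
          _ = ((p i)⁻¹ + p i) * (α ^ 2)⁻¹ := h4
    _ = ((∑ i, (p i)⁻¹) + 1) * (α ^ 2)⁻¹ := by
        rw [← Finset.sum_mul, Finset.sum_add_distrib, hsum]
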